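/- Let h be the 11-uniform morphism on {0,1,2,3} defined by h(0) = 01312021310, h(1) = 12023132021, h(2) = 23130203132, h(3) = 30201310203. For every n ≥ 1, the word h^n(0) is a palindrome of length 11^n that contains no factor of length p with period q satisfying p/q > 3/2. -/

import Mathlib

/-- A word `x` has period `q` (with `1 ≤ q ≤ |x|`) if `x[i] = x[i+q]`
whenever both indices are in range. -/
def HasPeriod {A : Type*} (x : List A) (q : ℕ) : Prop :=
  1 ≤ q ∧ q ≤ x.length ∧ ∀ i : ℕ, i + q < x.length → x[i]? = x[i + q]?

/-- `w` contains an `e`-power: a nonempty factor of length `p` with period `q`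
and `p/q ≥ e`. -/
def ContainsPowGe {A : Type*} (w : List A) (e : ℚ) : Prop :=
  ∃ x : List A, ∃ q : ℕ, x ≠ [] ∧ x <:+: w ∧ HasPeriod x q ∧
    e ≤ (x.length : ℚ) / (q : ℚ)

/-- `w` contains an `e⁺`-power: a nonempty factor of length `p` with period `q`
and `p/q > e`. -/
def ContainsPowGt {A : Type*} (w : List A) (e : ℚ) : Prop :=
  ∃ x : List A, ∃ q : ℕ, x ≠ [] ∧ x <:+: w ∧ HasPeriod x q ∧
    e < (x.length : ℚ) / (q : ℚ)

/-- The critical exponent of `w` is exactly `e`: some nonempty factor has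
exponent at least `e`, and no nonempty factor has exponent exceeding `e`. -/
def CritExpIs {A : Type*} (w : List A) (e : ℚ) : Prop :=
  ContainsPowGe w e ∧ ¬ ContainsPowGt w e

/-- The 11-uniform palindromic morphism on {0,1,2,3}. -/
def hmor : List (Fin 4) → List (Fin 4) :=
  fun w => w.flatMap (fun a =>
    if a = 0 then [0, 1, 3, 1, 2, 0, 2, 1, 3, 1, 0]
    else if a = 1 then [1, 2, 0, 2, 3, 1, 3, 2, 0, 2, 1]
    else if a = 2 then [2, 3, 1, 3, 0, 2, 0, 3, 1, 3, 2]
    else [3, 0, 2, 0, 1, 3, 1, 0, 2, 0, 3])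

namespace HmorAux

def img (a : Fin 4) : List (Fin 4) :=
  if a = 0 then [0, 1, 3, 1, 2, 0, 2, 1, 3, 1, 0]
  else if a = 1 then [1, 2, 0, 2, 3, 1, 3, 2, 0, 2, 1]
  else if a = 2 then [2, 3, 1, 3, 0, 2, 0, 3, 1, 3, 2]
  else [3, 0, 2, 0, 1, 3, 1, 0, 2, 0, 3]

lemma hmor_eq (w : List (Fin 4)) : hmor w = w.flatMap img := rfl

lemma hmor_cons (a : Fin 4) (w : List (Fin 4)) :
    hmor (a :: w) = img a ++ hmor w := by
  simp [hmor_eq]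

lemma hmor_nil : hmor [] = [] := rfl

lemma hmor_append (u v : List (Fin 4)) : hmor (u ++ v) = hmor u ++ hmor v := by
  simp [hmor_eq]

lemma img_length (a : Fin 4) : (img a).length = 11 := by
  revert a; decide

lemma img_reverse (a : Fin 4) : (img a).reverse = img a := by
  revert a; decide

lemma hmor_singleton (a : Fin 4) : hmor [a] = img a := by
  simp [hmor_eq]

lemma hmor_length (w : List (Fin 4)) : (hmor w).length = 11 * w.length := by
  induction w with
  | nil => rfl
  | cons a w ih =>
      rw [hmor_cons, List.length_append, img_length, ih, List.length_cons]
      ring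

lemma hmor_reverse (w : List (Fin 4)) : (hmor w).reverse = hmor w.reverse := by
  induction w with
  | nil => rfl
  | cons a w ih =>
      rw [hmor_cons, List.reverse_append, ih, List.reverse_cons, hmor_append,
        hmor_singleton, img_reverse]

lemma hmor_getElem? (w : List (Fin 4)) (j : ℕ) :
    (hmor w)[j]? = w[j / 11]?.bind (fun a => (img a)[j % 11]?) := by
  induction w generalizing j with
  | nil => simp [hmor_nil]
  | cons a w ih =>
      rw [hmor_cons]
      by_cases h : j < 11
      · rw [List.getElem?_append_left (by rw [img_length]; exact h)]
        have h1 : j / 11 = 0 := Nat.div_eq_of_lt h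
        have h2 : j % 11 = j := Nat.mod_eq_of_lt h
        rw [h1, h2]
        simp
      · push_neg at h
        rw [List.getElem?_append_right (by rw [img_length]; exact h)]
        rw [img_length, ih]
        have h1 : j / 11 = (j - 11) / 11 + 1 := by omega
        have h2 : j % 11 = (j - 11) % 11 := by omega
        rw [h1, h2]
        simp

/-- A minimal `(3/2)⁺`-power violation at position `i` with period `q`. -/
def Viol (w : List (Fin 4)) (i q : ℕ) : Prop :=
  1 ≤ q ∧ i + 3 * q / 2 + 1 ≤ w.length ∧
    ∀ j, j ≤ q / 2 → w[i + j]? = w[i + j + q]?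

instance (w : List (Fin 4)) (i q : ℕ) : Decidable (Viol w i q) := by
  unfold Viol; infer_instance

def Free (w : List (Fin 4)) : Prop := ∀ i q, ¬ Viol w i q

/-- Adjacent letters are distinct. -/
def Adj (w : List (Fin 4)) : Prop :=
  ∀ k, k + 1 < w.length → w[k]? ≠ w[k + 1]?

lemma not_containsPowGt_of_free {w : List (Fin 4)} (hf : Free w) :
    ¬ ContainsPowGt w (3 / 2) := by
  rintro ⟨x, q, hne, hinf, ⟨hq1, hql, hper⟩, hexp⟩
  obtain ⟨s, t, hw⟩ := hinf
  have hq0 : (0 : ℚ) < (q : ℚ) := by exact_mod_cast hq1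
  rw [div_lt_div_iff₀ (by norm_num) hq0] at hexp
  have hN : 3 * q < x.length * 2 := by exact_mod_cast hexp
  have hwl : s.length + x.length + t.length = w.length := by
    rw [← hw]; simp; omega
  have key : ∀ m, m < x.length → w[s.length + m]? = x[m]? := by
    intro m hm
    rw [← hw,
      List.getElem?_append_left
        (show s.length + m < (s ++ x).length by rw [List.length_append]; omega),
      List.getElem?_append_right (show s.length ≤ s.length + m by omega),
      show s.length + m - s.length = m by omega]
  refine hf s.length q ⟨hq1, by omega, ?_⟩
  intro j hj
  have hjq : j + q < x.length := by omega
  have e1 : w[s.length + j]? = x[j]? := key j (by omega)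
  have e2 : w[s.length + j + q]? = x[j + q]? := by
    have h1 : s.length + j + q = s.length + (j + q) := by omega
    rw [h1]; exact key (j + q) hjq
  rw [e1, e2]
  exact hper j hjq

/-- Indexing of the image of a factor within the image of the whole word. -/
lemma hmor_getElem?_offset {w z : List (Fin 4)} {k0 : ℕ}
    (hz : ∀ m, m < z.length → z[m]? = w[k0 + m]?) :
    ∀ r, r < 11 * z.length → (hmor z)[r]? = (hmor w)[11 * k0 + r]? := by
  intro r hr
  rw [hmor_getElem?, hmor_getElem?]
  have h1 : (11 * k0 + r) / 11 = k0 + r / 11 := by omega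
  have h2 : (11 * k0 + r) % 11 = r % 11 := by omega
  rw [h1, h2, hz (r / 11) (by omega)]

/-- Within each image, adjacent letters are distinct. -/
lemma adjIn : ∀ a : Fin 4, ∀ t < 10, (img a)[t]? ≠ (img a)[t + 1]? := by
  decide

/-- Across a boundary between images of distinct letters, letters differ. -/
lemma adjBd : ∀ a b : Fin 4, a ≠ b → (img a)[10]? ≠ (img b)[0]? := by
  decide

/-- The image of a word with distinct adjacent letters again has distinct
adjacent letters. -/
lemma stepAdj {u : List (Fin 4)} (hu : Adj u) : Adj (hmor u) := by
  intro m hm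
  rw [hmor_length] at hm
  have hk : m / 11 < u.length := by omega
  obtain ⟨a, ha⟩ : ∃ a, u[m / 11]? = some a :=
    ⟨u[m / 11], List.getElem?_eq_getElem hk⟩
  by_cases ht : m % 11 < 10
  · rw [hmor_getElem?, hmor_getElem?,
      show (m + 1) / 11 = m / 11 by omega,
      show (m + 1) % 11 = m % 11 + 1 by omega, ha]
    simpa using adjIn a (m % 11) ht
  · have hk1 : m / 11 + 1 < u.length := by omega
    obtain ⟨b, hb⟩ : ∃ b, u[m / 11 + 1]? = some b :=
      ⟨u[m / 11 + 1], List.getElem?_eq_getElem hk1⟩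
    have hab : a ≠ b := by
      have := hu (m / 11) hk1
      rw [ha, hb] at this
      simpa using this
    rw [hmor_getElem?, hmor_getElem?,
      show (m + 1) / 11 = m / 11 + 1 by omega,
      show (m + 1) % 11 = 0 by omega,
      show m % 11 = 10 by omega, ha, hb]
    simpa using adjBd a b hab

def dig (n i : ℕ) : ℕ := n / 4 ^ i % 4

def violN (n len i q : ℕ) : Prop :=
  1 ≤ q ∧ i + 3 * q / 2 + 1 ≤ len ∧
    ∀ j, j ≤ q / 2 → dig n (i + j) = dig n (i + j + q)

instance (n len i q : ℕ) : Decidable (violN n len i q) := by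
  unfold violN; infer_instance

/-- Base-4 encoding of a word (first letter least significant). -/
def enc : List (Fin 4) → ℕ
  | [] => 0
  | a :: w => a.val + 4 * enc w

lemma dig_enc : ∀ (w : List (Fin 4)) (i : ℕ) (h : i < w.length),
    dig (enc w) i = (w[i]'h).val := by
  intro w
  induction w with
  | nil => intro i h; simp at h
  | cons a w ih =>
      intro i h
      match i with
      | 0 =>
          show (a.val + 4 * enc w) / 4 ^ 0 % 4 = _
          rw [pow_zero, Nat.div_one, Nat.add_mul_mod_self_left,
            Nat.mod_eq_of_lt a.isLt]
          rfl
      | i + 1 =>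
          show (a.val + 4 * enc w) / 4 ^ (i + 1) % 4 = _
          rw [show (4:ℕ) ^ (i + 1) = 4 * 4 ^ i by ring,
            ← Nat.div_div_eq_div_mul,
            Nat.add_mul_div_left _ _ (by norm_num : (0:ℕ) < 4),
            Nat.div_eq_of_lt a.isLt, Nat.zero_add]
          exact ih i (by simpa using h)

lemma viol_to_violN {w : List (Fin 4)} {i q : ℕ} (h : Viol w i q) :
    violN (enc w) w.length i q := by
  obtain ⟨h1, h2, h3⟩ := h
  refine ⟨h1, h2, ?_⟩
  intro j hj
  have hlt1 : i + j < w.length := by omega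
  have hlt2 : i + j + q < w.length := by omega
  rw [dig_enc w _ hlt1, dig_enc w _ hlt2]
  have := h3 j hj
  rw [List.getElem?_eq_getElem hlt1, List.getElem?_eq_getElem hlt2] at this
  exact congrArg Fin.val (Option.some.inj this)

def L2 : List ℕ := [19290021899157935796146491185295322396039771006111173675778226829159825374999933488936802034439671218216730536527773707677664813785609171737469556,
  35732040722199234564324649908522721994102171670105978726336793832862535614853111138464302057496313149673250009991963858784960503771303944147919476,
  39110683945895902685374631917446674083262136848897391367000125407384742382485708594306583728207049493519175934256362853837365738379190945840587380,
  5763207042858678358365338342116603310551061040164533058377876638604792260934806167621281857764026006473867896314709401923251891618971682352969609,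
  35732040722199234564324649908522721994102171670105978726336793832862535616767087611860419982823803132626901237410083510943841112576876228669650825,
  39110683945895902685374631917446674083262136848897391367000125407384742384399685067702701653534539476472827161674482505996246347184763230362318729,
  5763207042858678358365338342116603310551061040164533058377876638604792263261269384332064574838465058565099394607780990189912131141403953358293214,
  19290021899157935796146491185295322396039771006111173675778226829159825379240373179043702676841600253261613262238964948103205662113613727264524510,
  39110683945895902685374631917446674083262136848897391367000125407384742386726148284413484370608978528564058659967554094262906586707195501367642334,
  5763207042858678358365338342116603310551061040164533058377876638604792263739330458639088910159290197706771361979600619769922708667544228026522915,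
  19290021899157935796146491185295322396039771006111173675778226829159825379718434253350727012162425392403285229610784577683216239639754001932754211,
  35732040722199234564324649908522721994102171670105978726336793832862535619571611902878227035219067323859804703074974728790511929625448774343204131]

def L1 : List ℕ := [815464897577532772803551703439564870101887353103744695496281985024221812,
  2729441370973650698131041686393216097520007005262625304301854269545953161,
  5055904587684433415205480738484447595813078593529285543824286540551276766,
  5533965661991457750526305877626119563184898223109296121350426815219506467]

/-- Mask with a `1` bit at positions `0, 2, …, 2(M-1)`. -/
def emask (M : ℕ) : ℕ := (4 ^ M - 1) / 3

def orShifts (y : ℕ) : ℕ → ℕ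
  | 0 => y
  | j + 1 => orShifts y j ||| y >>> (2 * (j + 1))

/-- Bitmask check that no violation with period exactly `q` occurs. -/
def qOK (n len q : ℕ) : Bool :=
  ((orShifts (n ^^^ (n >>> (2 * q))) (q / 2) |||
      orShifts (n ^^^ (n >>> (2 * q))) (q / 2) >>> 1) &&&
    emask (len - 3 * q / 2)) == emask (len - 3 * q / 2)

def allQ (n len : ℕ) : ℕ → Bool
  | 0 => true
  | q + 1 => allQ n len q && qOK n len (q + 1)

lemma emask_succ (M : ℕ) : emask (M + 1) = 4 * emask M + 1 := by
  have h1 : 4 ^ M % 3 = 1 := by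
    induction M with
    | zero => rfl
    | succ M ih => rw [pow_succ]; omega
  have h2 : (4 : ℕ) ^ (M + 1) = 4 * 4 ^ M := by ring
  have h3 : 1 ≤ (4 : ℕ) ^ M := Nat.one_le_pow _ _ (by norm_num)
  unfold emask
  omega

lemma pow_two_twice (i : ℕ) : (2 : ℕ) ^ (2 * (i + 1)) = 4 * 2 ^ (2 * i) := by
  rw [show 2 * (i + 1) = 2 + 2 * i by ring, pow_add]
  norm_num

lemma testBit_emask : ∀ {M i : ℕ}, i < M → (emask M).testBit (2 * i) = true := by
  intro M
  induction M with
  | zero => omega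
  | succ M ih =>
      intro i hi
      rw [emask_succ]
      cases i with
      | zero =>
          rw [Nat.testBit_eq_decide_div_mod_eq, decide_eq_true_eq]
          simp only [Nat.mul_zero, pow_zero, Nat.div_one]
          omega
      | succ i =>
          have e := ih (show i < M by omega)
          rw [Nat.testBit_eq_decide_div_mod_eq, decide_eq_true_eq] at e ⊢
          rw [pow_two_twice, ← Nat.div_div_eq_div_mul,
            show (4 * emask M + 1) / 4 = emask M by omega]
          exact e

lemma testBit_orShifts : ∀ {y J b : ℕ}, (orShifts y J).testBit b = true →
    ∃ j, j ≤ J ∧ y.testBit (2 * j + b) = true := by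
  intro y J
  induction J with
  | zero => intro b h; exact ⟨0, le_rfl, by simpa [orShifts] using h⟩
  | succ J ih =>
      intro b h
      simp only [orShifts, Nat.testBit_lor, Bool.or_eq_true] at h
      rcases h with h | h
      · obtain ⟨j, hj, hy⟩ := ih h
        exact ⟨j, by omega, hy⟩
      · rw [Nat.testBit_shiftRight] at h
        exact ⟨J + 1, le_rfl, by rwa [show 2 * (J + 1) + b = 2 * (J + 1) + b from rfl]⟩

lemma dig_as_pow2 (n a : ℕ) : dig n a = n / 2 ^ (2 * a) % 4 := by
  unfold dig
  rw [show (4 : ℕ) ^ a = 2 ^ (2 * a) by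
    rw [show (4 : ℕ) = 2 ^ 2 by norm_num, ← pow_mul]]

lemma dig_bits {n a b : ℕ} (h : dig n a = dig n b) :
    n.testBit (2 * a) = n.testBit (2 * b) ∧
    n.testBit (2 * a + 1) = n.testBit (2 * b + 1) := by
  rw [dig_as_pow2, dig_as_pow2] at h
  constructor
  · rw [Nat.testBit_eq_decide_div_mod_eq, Nat.testBit_eq_decide_div_mod_eq, decide_eq_decide]
    omega
  · rw [Nat.testBit_eq_decide_div_mod_eq, Nat.testBit_eq_decide_div_mod_eq, decide_eq_decide,
      show 2 * a + 1 = 2 * a + 1 from rfl,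
      pow_succ, pow_succ, ← Nat.div_div_eq_div_mul, ← Nat.div_div_eq_div_mul]
    omega

lemma qOK_sound {n len q : ℕ} (h : qOK n len q = true) :
    ∀ i, ¬ violN n len i q := by
  intro i hV
  obtain ⟨hq1, hlen, hdig⟩ := hV
  have hiM : i < len - 3 * q / 2 := by omega
  unfold qOK at h
  rw [beq_iff_eq] at h
  have h1 := testBit_emask (M := len - 3 * q / 2) hiM
  rw [← h, Nat.testBit_land, Bool.and_eq_true] at h1
  have h2 := h1.1
  rw [Nat.testBit_lor, Bool.or_eq_true] at h2
  rcases h2 with h2 | h2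
  · obtain ⟨j, hj, hy⟩ := testBit_orShifts h2
    rw [Nat.testBit_xor, Nat.testBit_shiftRight] at hy
    have hb := (dig_bits (hdig j hj)).1
    rw [show 2 * (i + j) = 2 * j + 2 * i by ring,
      show 2 * (i + j + q) = 2 * q + (2 * j + 2 * i) by ring] at hb
    rw [hb] at hy
    simp at hy
  · rw [Nat.testBit_shiftRight] at h2
    obtain ⟨j, hj, hy⟩ := testBit_orShifts h2
    rw [Nat.testBit_xor, Nat.testBit_shiftRight] at hy
    have hb := (dig_bits (hdig j hj)).2
    rw [show 2 * (i + j) + 1 = 2 * j + (1 + 2 * i) by ring,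
      show 2 * (i + j + q) + 1 = 2 * q + (2 * j + (1 + 2 * i)) by ring] at hb
    rw [hb] at hy
    simp at hy

lemma allQ_sound : ∀ {n len Q : ℕ}, allQ n len Q = true →
    ∀ q, 1 ≤ q → q ≤ Q → ∀ i, ¬ violN n len i q := by
  intro n len Q
  induction Q with
  | zero => intro _ q h1 h2; omega
  | succ Q ih =>
      intro h q h1 h2 i
      simp only [allQ, Bool.and_eq_true] at h
      by_cases hqQ : q ≤ Q
      · exact ih h.1 q h1 hqQ i
      · have : q = Q + 1 := by omega
        subst this
        exact qOK_sound h.2 i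

set_option maxRecDepth 2000 in
lemma check1N : ∀ p ∈ L1, allQ p 121 40 = true := by decide

set_option maxRecDepth 2000 in
lemma check2N : ∀ p ∈ L2, allQ p 242 40 = true := by decide

set_option maxRecDepth 10000 in
set_option maxHeartbeats 4000000 in
lemma enc_mem2 : ∀ a b : Fin 4, a ≠ b → enc (hmor (hmor [a, b])) ∈ L2 := by
  decide

set_option maxRecDepth 10000 in
set_option maxHeartbeats 4000000 in
lemma enc_mem1 : ∀ a : Fin 4, enc (hmor (hmor [a])) ∈ L1 := by
  decide

lemma len2 (a b : Fin 4) : (hmor (hmor [a, b])).length = 242 := by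
  rw [hmor_length, hmor_length]; rfl

lemma len1 (a : Fin 4) : (hmor (hmor [a])).length = 121 := by
  rw [hmor_length, hmor_length]; rfl

/-- Synchronization: no image of a letter occurs at a nonzero offset inside the
image of a two-letter word. -/
lemma syncFact : ∀ a b c : Fin 4, ∀ m < 11, 1 ≤ m →
    ¬ (∀ t < 11, (img a)[t]? =
        if m + t < 11 then (img b)[m + t]? else (img c)[m + t - 11]?) := by
  decide

/-- Column injectivity: the images of distinct letters differ in every
coordinate. -/
lemma colFact : ∀ a b : Fin 4, ∀ t < 11,
    (img a)[t]? = (img b)[t]? → a = b := by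
  decide

lemma stepFree {u : List (Fin 4)} (hadj : Adj u) (hf : Free (hmor u)) :
    Free (hmor (hmor u)) := by
  intro i q hV
  obtain ⟨hq1, hlen, heq⟩ := hV
  rw [hmor_length, hmor_length] at hlen
  -- hlen : i + 3 * q / 2 + 1 ≤ 11 * (11 * u.length)
  by_cases hq : q ≤ 40
  · -- small period: reduce to the finite checks
    set k1 : ℕ := i / 121 with hk1
    have hk1i : 121 * k1 ≤ i ∧ i ≤ 121 * k1 + 120 := by constructor <;> omega
    have hk1u : k1 < u.length := by omega
    set r : ℕ := i - 121 * k1 with hr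
    by_cases hk : k1 + 1 < u.length
    · obtain ⟨a, ha⟩ : ∃ a, u[k1]? = some a :=
        ⟨u[k1], List.getElem?_eq_getElem hk1u⟩
      obtain ⟨b, hb⟩ : ∃ b, u[k1 + 1]? = some b :=
        ⟨u[k1 + 1], List.getElem?_eq_getElem hk⟩
      have hab : a ≠ b := by
        have := hadj k1 hk
        rw [ha, hb] at this
        simpa using this
      have hz2 : ∀ m, m < ([a, b] : List (Fin 4)).length → [a, b][m]? = u[k1 + m]? := by
        intro m hm
        simp only [List.length_cons, List.length_nil] at hm
        interval_cases m
        · simpa using ha.symm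
        · simpa using hb.symm
      have h1 := hmor_getElem?_offset hz2
      have h1' : ∀ m, m < (hmor [a, b]).length →
          (hmor [a, b])[m]? = (hmor u)[11 * k1 + m]? := by
        intro m hm
        rw [hmor_length] at hm
        exact h1 m (by simpa using hm)
      have h2 := hmor_getElem?_offset h1'
      have h2' : ∀ m, m < 242 →
          (hmor (hmor [a, b]))[m]? = (hmor (hmor u))[121 * k1 + m]? := by
        intro m hm
        have := h2 m (by rw [hmor_length]; simpa using hm)
        rwa [show 11 * (11 * k1) = 121 * k1 by ring] at this
      have hviol : Viol (hmor (hmor [a, b])) r q := by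
        refine ⟨hq1, ?_, ?_⟩
        · rw [len2]; omega
        · intro j hj
          rw [h2' (r + j) (by omega), h2' (r + j + q) (by omega),
            show 121 * k1 + (r + j + q) = i + j + q by omega,
            show 121 * k1 + (r + j) = i + j by omega]
          exact heq j hj
      have := viol_to_violN hviol
      rw [len2] at this
      exact allQ_sound (check2N _ (enc_mem2 a b hab)) q hq1 hq r this
    · -- the relevant positions all lie in the image of the last letter
      have hklast : u.length = k1 + 1 := by omega
      obtain ⟨a, ha⟩ : ∃ a, u[k1]? = some a :=
        ⟨u[k1], List.getElem?_eq_getElem hk1u⟩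
      have hz1 : ∀ m, m < ([a] : List (Fin 4)).length → [a][m]? = u[k1 + m]? := by
        intro m hm
        simp only [List.length_cons, List.length_nil] at hm
        interval_cases m
        · simpa using ha.symm
      have h1 := hmor_getElem?_offset hz1
      have h1' : ∀ m, m < (hmor [a]).length →
          (hmor [a])[m]? = (hmor u)[11 * k1 + m]? := by
        intro m hm
        rw [hmor_length] at hm
        exact h1 m (by simpa using hm)
      have h2 := hmor_getElem?_offset h1'
      have h2' : ∀ m, m < 121 →
          (hmor (hmor [a]))[m]? = (hmor (hmor u))[121 * k1 + m]? := by
        intro m hm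
        have := h2 m (by rw [hmor_length]; simpa using hm)
        rwa [show 11 * (11 * k1) = 121 * k1 by ring] at this
      have hviol : Viol (hmor (hmor [a])) r q := by
        refine ⟨hq1, ?_, ?_⟩
        · rw [len1]; omega
        · intro j hj
          rw [h2' (r + j) (by omega), h2' (r + j + q) (by omega),
            show 121 * k1 + (r + j + q) = i + j + q by omega,
            show 121 * k1 + (r + j) = i + j by omega]
          exact heq j hj
      have := viol_to_violN hviol
      rw [len1] at this
      exact allQ_sound (check1N _ (enc_mem1 a)) q hq1 hq r this
  · -- large period
    push_neg at hq
    obtain ⟨v, hv⟩ : ∃ v, hmor u = v := ⟨_, rfl⟩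
    rw [hv] at hf heq
    have hlen' : i + 3 * q / 2 + 1 ≤ 11 * v.length := by
      rw [← hv, hmor_length]; omega
    -- Step 1: q is a multiple of 11
    have hmod : q % 11 = 0 := by
      by_contra hm0
      set k : ℕ := (i + 10) / 11 with hk
      have hki : i ≤ 11 * k ∧ 11 * k ≤ i + 10 := by constructor <;> omega
      have hrange : 11 * k + 10 + q < 11 * v.length := by omega
      have hkw : k < v.length := by omega
      set m : ℕ := q % 11 with hmdef
      set l : ℕ := k + q / 11 with hl
      have hll : 11 * l + m = 11 * k + q := by omega
      have hlw : l + 1 < v.length := by omega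
      obtain ⟨a, ha⟩ : ∃ a, v[k]? = some a :=
        ⟨v[k], List.getElem?_eq_getElem hkw⟩
      obtain ⟨b, hb⟩ : ∃ b, v[l]? = some b :=
        ⟨v[l]'(by omega), List.getElem?_eq_getElem (by omega)⟩
      obtain ⟨c, hc⟩ : ∃ c, v[l + 1]? = some c :=
        ⟨v[l + 1]'(by omega), List.getElem?_eq_getElem (by omega)⟩
      refine syncFact a b c m (by omega) (by omega) ?_
      intro t ht
      have e := heq (11 * k + t - i) (by omega)
      rw [show i + (11 * k + t - i) + q = 11 * k + t + q by omega,
        show i + (11 * k + t - i) = 11 * k + t by omega,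
        hmor_getElem?, hmor_getElem?,
        show (11 * k + t) / 11 = k by omega,
        show (11 * k + t) % 11 = t by omega, ha] at e
      by_cases hmt : m + t < 11
      · rw [show (11 * k + t + q) / 11 = l by omega,
          show (11 * k + t + q) % 11 = m + t by omega, hb] at e
        simpa [hmt] using e
      · rw [show (11 * k + t + q) / 11 = l + 1 by omega,
          show (11 * k + t + q) % 11 = m + t - 11 by omega, hc] at e
        simpa [hmt] using e
    -- Step 2: desubstitute
    set q' : ℕ := q / 11 with hq'
    have hq11 : q = 11 * q' := by omega
    set k0 : ℕ := i / 11 with hk0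
    set k1 : ℕ := (i + q / 2) / 11 with hk1
    have hk0i : 11 * k0 ≤ i ∧ i ≤ 11 * k0 + 10 := by constructor <;> omega
    have hk1i : 11 * k1 ≤ i + q / 2 ∧ i + q / 2 ≤ 11 * k1 + 10 := by
      constructor <;> omega
    have hEQ : ∀ k, k0 ≤ k → k ≤ k1 → v[k]? = v[k + q']? := by
      intro k h0 h1
      set j : ℕ := max i (11 * k) with hjdef
      have hj1 : i ≤ j := le_max_left _ _
      have hj2 : 11 * k ≤ j := le_max_right _ _
      have hj3 : j ≤ 11 * k + 10 := by omega
      have hj4 : j ≤ i + q / 2 := by omega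
      have hkw : k < v.length := by omega
      have hkqw : k + q' < v.length := by omega
      obtain ⟨x, hx⟩ : ∃ x, v[k]? = some x :=
        ⟨v[k], List.getElem?_eq_getElem hkw⟩
      obtain ⟨y, hy⟩ : ∃ y, v[k + q']? = some y :=
        ⟨v[k + q']'hkqw, List.getElem?_eq_getElem hkqw⟩
      have e := heq (j - i) (by omega)
      rw [show i + (j - i) + q = j + q by omega,
        show i + (j - i) = j by omega,
        hmor_getElem?, hmor_getElem?,
        show j / 11 = k by omega,
        show (j + q) / 11 = k + q' by omega,
        show (j + q) % 11 = j % 11 by omega,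
        hx, hy] at e
      have := colFact x y (j % 11) (by omega) (by simpa using e)
      rw [hx, hy, this]
    have hk1w : k1 + q' < v.length := by omega
    have hhalf : k0 + q' / 2 ≤ k1 := by omega
    refine hf k0 q' ⟨by omega, by omega, ?_⟩
    intro j hj
    exact hEQ (k0 + j) (by omega) (by omega)

lemma free_of_bounded {w : List (Fin 4)}
    (h : ∀ i < w.length, ∀ q ≤ w.length, ¬ Viol w i q) : Free w := by
  intro i q hV
  obtain ⟨h1, h2, h3⟩ := hV
  exact h i (by omega) q (by omega) ⟨h1, h2, h3⟩

lemma free_base : Free (hmor [0]) := by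
  apply free_of_bounded
  decide

lemma adj_iterate (n : ℕ) : Adj (hmor^[n] [0]) := by
  induction n with
  | zero =>
      intro k hk
      simp only [Function.iterate_zero, id_eq, List.length_singleton] at hk
      omega
  | succ n ih =>
      rw [Function.iterate_succ_apply']
      exact stepAdj ih

lemma free_iterate_aux (n : ℕ) :
    Free (hmor^[n] [0]) ∧ Free (hmor^[n + 1] [0]) := by
  induction n with
  | zero =>
      constructor
      · intro i q hV
        obtain ⟨h1, h2, _⟩ := hV
        simp only [Function.iterate_zero, id_eq, List.length_singleton] at h2
        omega
      · rw [Function.iterate_one]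
        exact free_base
  | succ n ih =>
      refine ⟨ih.2, ?_⟩
      have h2 := ih.2
      rw [Function.iterate_succ_apply'] at h2
      rw [Function.iterate_succ_apply', Function.iterate_succ_apply']
      exact stepFree (adj_iterate n) h2

lemma free_iterate (n : ℕ) : Free (hmor^[n] [0]) := (free_iterate_aux n).1

lemma length_iterate (n : ℕ) : ((hmor^[n]) [0]).length = 11 ^ n := by
  induction n with
  | zero => rfl
  | succ n ih =>
      rw [Function.iterate_succ_apply', hmor_length, ih, pow_succ]
      ring

lemma reverse_iterate (n : ℕ) : ((hmor^[n]) [0]).reverse = (hmor^[n]) [0] := by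
  induction n with
  | zero => rfl
  | succ n ih =>
      rw [Function.iterate_succ_apply', hmor_reverse, ih]

end HmorAux

theorem hmor_iterate_palindrome_avoids (n : ℕ) (hn : 1 ≤ n) :
    ((hmor^[n]) [0]).reverse = (hmor^[n]) [0] ∧
    ((hmor^[n]) [0]).length = 11 ^ n ∧
    ¬ ContainsPowGt ((hmor^[n]) [0]) (3 / 2) := by
  exact ⟨HmorAux.reverse_iterate n, HmorAux.length_iterate n,
    HmorAux.not_containsPowGt_of_free (HmorAux.free_iterate n)⟩
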